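/- Let F be a presheaf of types on a topological space B, and equip the disjoint union Et(F) of the stalks of F with the topology generated by the sets Im(s_U) = { (x, germ of s at x) | x ∈ U } for U open in B and s ∈ F(U). Then the canonical projection π_F : Et(F) → B sending (x, g) to x is a local homeomorphism. -/

import Mathlib

open CategoryTheory TopologicalSpace Opposite

universe u

/-- The disjoint union of the stalks of a presheaf `F` over all points of the base space. -/
def EtSpace {B : TopCat.{u}} (F : B.Presheaf (Type u)) : Type u :=
  Σ x : B, F.stalk x

/-- The image `Im(s_U)` of the germ map of a section `s ∈ F(U)`:
the set of pairs `(x, germ of s at x)` for `x ∈ U`. -/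
def imSet {B : TopCat.{u}} (F : B.Presheaf (Type u)) (U : Opens B) (s : F.obj (op U)) :
    Set (EtSpace F) :=
  { p | ∃ hx : p.1 ∈ U, p.2 = F.germ U p.1 hx s }

/-- The étalé topology on the disjoint union of stalks: the topology generated by the
images of the germ maps of sections of `F`. -/
def etTopology {B : TopCat.{u}} (F : B.Presheaf (Type u)) :
    TopologicalSpace (EtSpace F) :=
  TopologicalSpace.generateFrom
    { S | ∃ (U : Opens B) (s : F.obj (op U)), S = imSet F U s }

lemma isOpen_imSet {B : TopCat.{u}} (F : B.Presheaf (Type u)) (U : Opens B)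
    (s : F.obj (op U)) : @IsOpen _ (etTopology F) (imSet F U s) :=
  TopologicalSpace.isOpen_generateFrom_of_mem ⟨U, s, rfl⟩

/-- The canonical projection from the space of germs of a presheaf of types to the base
space is a local homeomorphism. -/
theorem etale_projection_isLocalHomeomorph
    {B : TopCat.{u}} (F : B.Presheaf (Type u)) :
    letI : TopologicalSpace (EtSpace F) := etTopology F
    IsLocalHomeomorph (fun p : EtSpace F => p.1) := by
  classical
  letI : TopologicalSpace (EtSpace F) := etTopology F
  intro p
  obtain ⟨U, hxU, s, hs⟩ := TopCat.Presheaf.germ_exist F (x := p.1) p.2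
  refine ⟨{ toFun := fun q : EtSpace F => q.1
            invFun := fun y => if h : y ∈ U then @id (EtSpace F) ⟨y, F.germ U y h s⟩ else p
            source := imSet F U s
            target := (U : Set B)
            map_source' := fun q hq => hq.1
            map_target' := fun y hy => by
              have hy' : y ∈ U := hy
              simp only [dif_pos hy']; exact ⟨hy', rfl⟩
            left_inv' := fun q hq => by
              obtain ⟨h, he⟩ := hq
              obtain ⟨a, b⟩ := q
              simp only [dif_pos h]
              exact congrArg (Sigma.mk a) he.symm
            right_inv' := fun y hy => by
              have hy' : y ∈ U := hy
              rw [dif_pos hy']; rfl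
            open_source := isOpen_imSet F U s
            open_target := U.isOpen
            continuousOn_toFun := by
              rw [continuousOn_iff']
              intro t ht
              refine ⟨imSet F (U ⊓ ⟨t, ht⟩) (F.map (homOfLE inf_le_left).op s),
                isOpen_imSet _ _ _, ?_⟩
              ext q
              constructor
              · rintro ⟨hqt, hU, he⟩
                refine ⟨⟨⟨hU, hqt⟩, ?_⟩, hU, he⟩
                rw [he]
                exact (F.germ_res_apply (homOfLE inf_le_left) q.1 ⟨hU, hqt⟩ s).symm
              · rintro ⟨⟨⟨hU, hqt⟩, _⟩, hq⟩
                exact ⟨hqt, hq⟩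
            continuousOn_invFun := by
              rw [continuousOn_iff_continuous_restrict]
              apply continuous_generateFrom_iff.mpr
              rintro S ⟨V, t, rfl⟩
              rw [isOpen_induced_iff]
              refine ⟨{ z : B | ∃ (hU : z ∈ U) (hV : z ∈ V),
                  F.germ U z hU s = F.germ V z hV t }, ?_, ?_⟩
              · rw [isOpen_iff_forall_mem_open]
                rintro z ⟨hU, hV, heq⟩
                obtain ⟨W, m, iU, iV, e⟩ := F.germ_eq z hU hV s t heq
                exact ⟨W, fun w hw =>
                  ⟨iU.le hw, iV.le hw, TopCat.Presheaf.germ_ext F W hw iU iV e⟩,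
                  W.isOpen, m⟩
              · ext y
                constructor
                · rintro ⟨hU, hV, heq⟩
                  show (if h : ↑y ∈ U then @id (EtSpace F) ⟨↑y, F.germ U ↑y h s⟩ else p) ∈ imSet F V t
                  rw [dif_pos hU]
                  exact ⟨hV, heq.symm ▸ rfl⟩
                · intro hy
                  have hy' : (if h : ↑y ∈ U then @id (EtSpace F) ⟨↑y, F.germ U ↑y h s⟩
                      else p) ∈ imSet F V t := hy
                  have hU : (y : B) ∈ U := y.2
                  rw [dif_pos hU] at hy'
                  obtain ⟨hV, he⟩ := hy'
                  exact ⟨hU, hV, he⟩ },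
    ⟨hxU, hs.symm⟩, rfl⟩
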